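/- Let F : Ω → ℝ^m be continuously differentiable, x₀ ∈ Ω with F'(x₀) ≠ 0 and rank F'(x) ≤ rank F'(x₀) for all x ∈ Ω, and suppose ‖F'(x₀)†‖ ‖F'(y) - F'(x)‖ ≤ f'(‖y-x‖+‖x-x₀‖) - f'(‖x-x₀‖) for x,y ∈ B(x₀,R) with ‖x-x₀‖+‖y-x‖ < R, where f is a majorant function and h(t)=β+λt+f(t) has smallest zero t*. Then for any x with ‖x - x₀‖ ≤ t < t*, rank F'(x) = rank F'(x₀) ≥ 1 and ‖F'(x)†‖ ≤ -‖F'(x₀)†‖ / f'(t). -/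

import Mathlib

open Set ContinuousLinearMap

/-- `B` is the Moore-Penrose inverse of `A`. -/
def IsMoorePenrose {n m : ℕ}
    (A : EuclideanSpace ℝ (Fin n) →L[ℝ] EuclideanSpace ℝ (Fin m))
    (B : EuclideanSpace ℝ (Fin m) →L[ℝ] EuclideanSpace ℝ (Fin n)) : Prop :=
  A ∘L B ∘L A = A ∧ B ∘L A ∘L B = B ∧
  ContinuousLinearMap.adjoint (A ∘L B) = A ∘L B ∧
  ContinuousLinearMap.adjoint (B ∘L A) = B ∘L A

/-- The rank of a continuous linear map. -/
noncomputable def rnk {n m : ℕ}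
    (A : EuclideanSpace ℝ (Fin n) →L[ℝ] EuclideanSpace ℝ (Fin m)) : ℕ :=
  Module.finrank ℝ (LinearMap.range A.toLinearMap)

set_option maxHeartbeats 1000000

lemma proj_norm_le {k : ℕ} (Q : EuclideanSpace ℝ (Fin k) →L[ℝ] EuclideanSpace ℝ (Fin k))
    (hQ : Q ∘L Q = Q) (hsa : ContinuousLinearMap.adjoint Q = Q) (x : EuclideanSpace ℝ (Fin k)) :
    ‖Q x‖ ≤ ‖x‖ := by
  have h1 : ‖Q x‖ ^ 2 = inner ℝ (Q x) (Q x) := (real_inner_self_eq_norm_sq _).symm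
  have h2 : (inner ℝ (Q x) (Q x) : ℝ) = inner ℝ x (Q x) := by
    calc (inner ℝ (Q x) (Q x) : ℝ) = inner ℝ x (ContinuousLinearMap.adjoint Q (Q x)) := by
          rw [ContinuousLinearMap.adjoint_inner_right]
      _ = inner ℝ x ((Q ∘L Q) x) := by rw [hsa]; rfl
      _ = inner ℝ x (Q x) := by rw [hQ]
  have h3 : (inner ℝ x (Q x) : ℝ) ≤ ‖x‖ * ‖Q x‖ := real_inner_le_norm _ _
  nlinarith [norm_nonneg (Q x), norm_nonneg x]

lemma mp_perturb {n m : ℕ}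
    (A B : EuclideanSpace ℝ (Fin n) →L[ℝ] EuclideanSpace ℝ (Fin m))
    (A' B' : EuclideanSpace ℝ (Fin m) →L[ℝ] EuclideanSpace ℝ (Fin n))
    (hA : IsMoorePenrose A A') (hB : IsMoorePenrose B B')
    (hrk : rnk A ≤ rnk B) (ε : ℝ)
    (hε : ‖B'‖ * ‖A - B‖ ≤ ε) (hε1 : ε < 1) :
    rnk A = rnk B ∧ ‖A'‖ ≤ ‖B'‖ / (1 - ε) := by
  obtain ⟨hA1, hA2, hA3, hA4⟩ := hA
  obtain ⟨hB1, hB2, hB3, hB4⟩ := hB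
  have h1ε : (0:ℝ) < 1 - ε := by linarith
  -- pointwise versions
  have pB1 : ∀ u, B (B' (B u)) = B u := fun u => congrFun (congrArg DFunLike.coe hB1) u
  have pB2 : ∀ u, B' (B (B' u)) = B' u := fun u => congrFun (congrArg DFunLike.coe hB2) u
  have pA1 : ∀ u, A (A' (A u)) = A u := fun u => congrFun (congrArg DFunLike.coe hA1) u
  have pA2 : ∀ u, A' (A (A' u)) = A' u := fun u => congrFun (congrArg DFunLike.coe hA2) u
  set S : Submodule ℝ (EuclideanSpace ℝ (Fin n)) := LinearMap.range (B' ∘L B).toLinearMap with hS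
  set T : Submodule ℝ (EuclideanSpace ℝ (Fin n)) := LinearMap.range (A' ∘L A).toLinearMap with hT
  have hSfix : ∀ x ∈ S, B' (B x) = x := by
    rintro x ⟨u, rfl⟩
    show B' (B (B' (B u))) = _
    rw [pB1 u]
    rfl
  have key : ∀ x ∈ S, (1 - ε) * ‖x‖ ≤ ‖B'‖ * ‖A x‖ := by
    intro x hx
    have h1 : ‖x‖ ≤ ‖B'‖ * ‖B x‖ := by
      conv_lhs => rw [← hSfix x hx]
      exact B'.le_opNorm (B x)
    have h3 : ‖(A - B) x‖ ≤ ‖A - B‖ * ‖x‖ := (A - B).le_opNorm x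
    have h2 : ‖B x‖ ≤ ‖A x‖ + ‖A - B‖ * ‖x‖ := by
      have he : B x = A x - (A - B) x := by
        rw [ContinuousLinearMap.sub_apply]; exact (sub_sub_cancel _ _).symm
      calc ‖B x‖ = ‖A x - (A - B) x‖ := by rw [← he]
        _ ≤ ‖A x‖ + ‖(A - B) x‖ := norm_sub_le _ _
        _ ≤ ‖A x‖ + ‖A - B‖ * ‖x‖ := by linarith
    have h4 : ‖B'‖ * ‖B x‖ ≤ ‖B'‖ * ‖A x‖ + ‖B'‖ * ‖A - B‖ * ‖x‖ := by
      have := mul_le_mul_of_nonneg_left h2 (norm_nonneg B')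
      nlinarith [norm_nonneg B']
    have h5 : ‖B'‖ * ‖A - B‖ * ‖x‖ ≤ ε * ‖x‖ :=
      mul_le_mul_of_nonneg_right hε (norm_nonneg x)
    have hexp : (1 - ε) * ‖x‖ = ‖x‖ - ε * ‖x‖ := by ring
    linarith
  have hinjS : ∀ x ∈ S, A x = 0 → x = 0 := by
    intro x hx hAx
    have h := key x hx
    rw [hAx, norm_zero, mul_zero] at h
    have hx0 : ‖x‖ ≤ 0 := by nlinarith [norm_nonneg x]
    exact norm_le_zero_iff.mp hx0
  -- rank B ≤ finrank S
  have d1 : rnk B ≤ Module.finrank ℝ S := by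
    have hle : LinearMap.range (B : EuclideanSpace ℝ (Fin n) →ₗ[ℝ] EuclideanSpace ℝ (Fin m))
        ≤ S.map (B : EuclideanSpace ℝ (Fin n) →ₗ[ℝ] EuclideanSpace ℝ (Fin m)) := by
      rintro y ⟨u, rfl⟩
      exact ⟨B' (B u), ⟨u, rfl⟩, pB1 u⟩
    calc rnk B ≤ Module.finrank ℝ (S.map (B : EuclideanSpace ℝ (Fin n) →ₗ[ℝ]
            EuclideanSpace ℝ (Fin m))) := Submodule.finrank_mono hle
      _ ≤ Module.finrank ℝ S := Submodule.finrank_map_le _ _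
  -- finrank S ≤ rank A via injectivity of A on S
  have d2 : Module.finrank ℝ S ≤ rnk A := by
    set φ := (A : EuclideanSpace ℝ (Fin n) →ₗ[ℝ] EuclideanSpace ℝ (Fin m)).domRestrict S with hφ
    have hinj : Function.Injective φ := by
      intro a b hab
      have : A ((a : EuclideanSpace ℝ (Fin n)) - b) = 0 := by
        have : A (a : EuclideanSpace ℝ (Fin n)) = A (b : EuclideanSpace ℝ (Fin n)) := hab
        rw [map_sub, this, sub_self]
      have h0 := hinjS ((a : EuclideanSpace ℝ (Fin n)) - b)
        (S.sub_mem a.2 b.2) this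
      exact Subtype.ext (by rwa [sub_eq_zero] at h0)
    have heq : Module.finrank ℝ (LinearMap.range φ) = Module.finrank ℝ S :=
      LinearMap.finrank_range_of_inj hinj
    have hle : LinearMap.range φ ≤ LinearMap.range A.toLinearMap := by
      rintro y ⟨a, rfl⟩; exact ⟨a, rfl⟩
    calc Module.finrank ℝ S = Module.finrank ℝ (LinearMap.range φ) := heq.symm
      _ ≤ rnk A := Submodule.finrank_mono hle
  -- finrank T = rank A
  have d3 : rnk A ≤ Module.finrank ℝ T := by
    have hle : LinearMap.range (A : EuclideanSpace ℝ (Fin n) →ₗ[ℝ] EuclideanSpace ℝ (Fin m))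
        ≤ T.map (A : EuclideanSpace ℝ (Fin n) →ₗ[ℝ] EuclideanSpace ℝ (Fin m)) := by
      rintro y ⟨u, rfl⟩
      exact ⟨A' (A u), ⟨u, rfl⟩, pA1 u⟩
    calc rnk A ≤ Module.finrank ℝ (T.map (A : EuclideanSpace ℝ (Fin n) →ₗ[ℝ]
            EuclideanSpace ℝ (Fin m))) := Submodule.finrank_mono hle
      _ ≤ Module.finrank ℝ T := Submodule.finrank_map_le _ _
  have d4 : Module.finrank ℝ T ≤ rnk A := by
    have hT' : T = (LinearMap.range A.toLinearMap).map (A' : EuclideanSpace ℝ (Fin m) →ₗ[ℝ]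
        EuclideanSpace ℝ (Fin n)) := by
      apply le_antisymm
      · rintro y ⟨u, rfl⟩; exact ⟨A u, ⟨u, rfl⟩, rfl⟩
      · rintro y ⟨v, ⟨u, rfl⟩, rfl⟩; exact ⟨u, rfl⟩
    rw [hT']
    exact (Submodule.finrank_map_le _ _).trans (le_refl _)
  have hrkAB : rnk A = rnk B := le_antisymm hrk (d1.trans d2)
  have eqS : Module.finrank ℝ S = rnk A := le_antisymm d2 (hrkAB ▸ d1)
  have eqT : Module.finrank ℝ T = rnk A := le_antisymm d4 d3
  refine ⟨hrkAB, ?_⟩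
  -- Q = A' ∘L A is the orthogonal projection onto T
  set Q : EuclideanSpace ℝ (Fin n) →L[ℝ] EuclideanSpace ℝ (Fin n) := A' ∘L A with hQdef
  have hQQ : Q ∘L Q = Q := by
    refine ContinuousLinearMap.ext fun u => ?_
    show A' (A (A' (A u))) = A' (A u)
    exact pA2 (A u)
  have hQle : ∀ x, ‖Q x‖ ≤ ‖x‖ := proj_norm_le Q hQQ hA4
  -- Q maps S onto T
  have hmapQ : S.map (Q : EuclideanSpace ℝ (Fin n) →ₗ[ℝ] EuclideanSpace ℝ (Fin n)) = T := by
    have hle : S.map (Q : EuclideanSpace ℝ (Fin n) →ₗ[ℝ] EuclideanSpace ℝ (Fin n)) ≤ T := by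
      rintro y ⟨x, _, rfl⟩; exact ⟨x, rfl⟩
    have hinj : Function.Injective ((Q : EuclideanSpace ℝ (Fin n) →ₗ[ℝ]
        EuclideanSpace ℝ (Fin n)).domRestrict S) := by
      intro a b hab
      have h0 : Q ((a : EuclideanSpace ℝ (Fin n)) - b) = 0 := by
        have : Q (a : EuclideanSpace ℝ (Fin n)) = Q (b : EuclideanSpace ℝ (Fin n)) := hab
        rw [map_sub, this, sub_self]
      have hA0 : A ((a : EuclideanSpace ℝ (Fin n)) - b) = 0 := by
        have := congrArg A h0
        rw [map_zero] at this
        rw [← this]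
        exact (pA1 _).symm
      have h1 := hinjS _ (S.sub_mem a.2 b.2) hA0
      exact Subtype.ext (by rwa [sub_eq_zero] at h1)
    have heq : Module.finrank ℝ (S.map (Q : EuclideanSpace ℝ (Fin n) →ₗ[ℝ]
        EuclideanSpace ℝ (Fin n))) = Module.finrank ℝ S := by
      have := LinearMap.finrank_range_of_inj hinj
      rwa [LinearMap.range_domRestrict] at this
    exact Submodule.eq_of_le_of_finrank_le hle (by rw [heq, eqS, eqT])
  -- lower bound on T
  have keyT : ∀ u ∈ T, (1 - ε) * ‖u‖ ≤ ‖B'‖ * ‖A u‖ := by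
    intro u hu
    rw [← hmapQ] at hu
    obtain ⟨x, hxS, rfl⟩ := hu
    have h1 : ‖A (Q x)‖ = ‖A x‖ := by
      show ‖A (A' (A x))‖ = ‖A x‖
      rw [pA1]
    show (1 - ε) * ‖Q x‖ ≤ ‖B'‖ * ‖A (Q x)‖
    rw [h1]
    calc (1 - ε) * ‖Q x‖ ≤ (1 - ε) * ‖x‖ :=
          mul_le_mul_of_nonneg_left (hQle x) (le_of_lt h1ε)
      _ ≤ ‖B'‖ * ‖A x‖ := key x hxS
  -- P = A ∘L A' is the orthogonal projection onto range A
  have hPP : (A ∘L A') ∘L (A ∘L A') = A ∘L A' := by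
    refine ContinuousLinearMap.ext fun u => ?_
    show A (A' (A (A' u))) = A (A' u)
    exact congrArg A (pA2 u)
  have hPle : ∀ y, ‖(A ∘L A') y‖ ≤ ‖y‖ := proj_norm_le _ hPP hA3
  -- conclude
  apply ContinuousLinearMap.opNorm_le_bound _ (by positivity)
  intro y
  have hAyT : A' y ∈ T := ⟨A' y, pA2 y⟩
  have h1 := keyT (A' y) hAyT
  have h2 : ‖A (A' y)‖ ≤ ‖y‖ := hPle y
  have h3 : (1 - ε) * ‖A' y‖ ≤ ‖B'‖ * ‖y‖ := by
    refine h1.trans ?_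
    exact mul_le_mul_of_nonneg_left h2 (norm_nonneg B')
  rw [div_mul_eq_mul_div, le_div_iff₀ h1ε]
  linarith

/-- Under the majorant condition, for `‖x - x₀‖ ≤ t < t*` one has
`rank F'(x) = rank F'(x₀) ≥ 1` and `‖F'(x)†‖ ≤ -‖F'(x₀)†‖ / f'(t)`. -/
theorem pinv_bound (n m : ℕ) (Ω : Set (EuclideanSpace ℝ (Fin n))) (hΩ : IsOpen Ω)
    (F : EuclideanSpace ℝ (Fin n) → EuclideanSpace ℝ (Fin m))
    (F' : EuclideanSpace ℝ (Fin n) → (EuclideanSpace ℝ (Fin n) →L[ℝ] EuclideanSpace ℝ (Fin m)))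
    (pinv : EuclideanSpace ℝ (Fin n) → (EuclideanSpace ℝ (Fin m) →L[ℝ] EuclideanSpace ℝ (Fin n)))
    (hF : ∀ x ∈ Ω, HasFDerivAt F (F' x) x)
    (hpinv : ∀ x ∈ Ω, IsMoorePenrose (F' x) (pinv x))
    (x₀ : EuclideanSpace ℝ (Fin n)) (hx₀ : x₀ ∈ Ω)
    (hF'x₀ : F' x₀ ≠ 0)
    (hrank : ∀ x ∈ Ω, rnk (F' x) ≤ rnk (F' x₀))
    (R : ℝ) (hR : 0 < R) (hball : Metric.ball x₀ R ⊆ Ω)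
    (β lam : ℝ) (hβ : β = ‖pinv x₀ (F x₀)‖) (hβpos : 0 < β) (hlam : 0 ≤ lam)
    (f f' : ℝ → ℝ)
    (hder : ∀ t ∈ Ico (0:ℝ) R, HasDerivWithinAt f (f' t) (Ico (0:ℝ) R) t)
    (hf0 : f 0 = 0) (hf'0 : f' 0 = -1)
    (hconv : ConvexOn ℝ (Ico (0:ℝ) R) f')
    (hmono : StrictMonoOn f' (Ico (0:ℝ) R))
    (hmaj : ∀ x ∈ Metric.ball x₀ R, ∀ y ∈ Metric.ball x₀ R,
        ‖x - x₀‖ + ‖y - x‖ < R →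
        ‖pinv x₀‖ * ‖F' y - F' x‖ ≤ f' (‖y - x‖ + ‖x - x₀‖) - f' ‖x - x₀‖)
    (h : ℝ → ℝ) (hh : h = fun t => β + lam * t + f t)
    (tstar : ℝ) (htstar : tstar ∈ Ioo (0:ℝ) R) (hz : h tstar = 0)
    (hmin : ∀ t ∈ Ioo (0:ℝ) R, h t = 0 → tstar ≤ t)
    (hneg : ∀ t ∈ Ico (0:ℝ) tstar, f' t < 0) :
    ∀ (x : EuclideanSpace ℝ (Fin n)) (t : ℝ), ‖x - x₀‖ ≤ t → t < tstar →
      rnk (F' x) = rnk (F' x₀) ∧ 1 ≤ rnk (F' x) ∧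
      ‖pinv x‖ ≤ -‖pinv x₀‖ / f' t := by
  intro x t hxt htlt
  have ht0 : 0 ≤ t := le_trans (norm_nonneg _) hxt
  have htR : t < R := htlt.trans htstar.2
  have hxball : x ∈ Metric.ball x₀ R := by
    rw [Metric.mem_ball, dist_eq_norm]; linarith
  have hxΩ : x ∈ Ω := hball hxball
  have hx0ball : x₀ ∈ Metric.ball x₀ R := Metric.mem_ball_self hR
  have hcond : ‖x₀ - x₀‖ + ‖x - x₀‖ < R := by
    rw [sub_self, norm_zero, zero_add]; linarith
  have hE := hmaj x₀ hx0ball x hxball hcond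
  rw [sub_self, norm_zero, add_zero, hf'0, sub_neg_eq_add] at hE
  have hmem1 : ‖x - x₀‖ ∈ Ico (0:ℝ) R := ⟨norm_nonneg _, by linarith⟩
  have hmem2 : t ∈ Ico (0:ℝ) R := ⟨ht0, htR⟩
  have hfle : f' ‖x - x₀‖ ≤ f' t := hmono.monotoneOn hmem1 hmem2 hxt
  have hft : f' t < 0 := hneg t ⟨ht0, htlt⟩
  have hεle : ‖pinv x₀‖ * ‖F' x - F' x₀‖ ≤ f' t + 1 := by linarith
  have hε1 : f' t + 1 < 1 := by linarith
  obtain ⟨hrkeq, hbound⟩ := mp_perturb (F' x) (F' x₀) (pinv x) (pinv x₀)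
    (hpinv x hxΩ) (hpinv x₀ hx₀) (hrank x hxΩ) (f' t + 1) hεle hε1
  refine ⟨hrkeq, ?_, ?_⟩
  · rw [hrkeq]
    obtain ⟨v, hv⟩ : ∃ v, F' x₀ v ≠ 0 := by
      by_contra hc
      push_neg at hc
      exact hF'x₀ (ContinuousLinearMap.ext fun v => by simp [hc v])
    have hpos : 0 < rnk (F' x₀) := by
      rw [rnk]
      rw [Module.finrank_pos_iff_exists_ne_zero (R := ℝ)]
      refine ⟨⟨F' x₀ v, LinearMap.mem_range_self _ v⟩, ?_⟩
      intro hc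
      exact hv (congrArg Subtype.val hc)
    omega
  · have heq : (1 : ℝ) - (f' t + 1) = -(f' t) := by ring
    rw [heq, div_neg, ← neg_div] at hbound
    exact hbound
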